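/- Fix n ≥ 1, ω₀ ∈ ℝ, γ ≥ 0, a unitary B ∈ M_n(ℂ), and a Hermitian H_B ∈ M_n(ℂ). Let H = ω₀·(σ_z ⊗ I_n) + I₂ ⊗ H_B and E = σ_z ⊗ B acting on ℂ² ⊗ ℂⁿ. Suppose ρ(t) satisfies the Lindblad equation dρ/dt = -i[H, ρ] + γ(2EρE† - E†Eρ - ρE†E). Then v(t) := tr(ρ(t)·(σ_- ⊗ I_n)) satisfies dv/dt = (-2iω₀ - 4γ)·v, hence |v(t)| = |v(0)|·exp(-4γt) is monotonically nonincreasing. -/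

import Mathlib

open Matrix Complex
open scoped Kronecker

private lemma neg_kron {m n : Type*} [Fintype m] [Fintype n]
    (A : Matrix m m ℂ) (B : Matrix n n ℂ) :
    (-A) ⊗ₖ B = -(A ⊗ₖ B) := by
  ext ⟨i, a⟩ ⟨j, b⟩
  simp [kroneckerMap_apply]

private lemma kron_conjTranspose {m n : Type*} [Fintype m] [Fintype n]
    [DecidableEq m] [DecidableEq n]
    (A : Matrix m m ℂ) (B : Matrix n n ℂ) :
    (A ⊗ₖ B)ᴴ = Aᴴ ⊗ₖ Bᴴ := by
  ext ⟨i, a⟩ ⟨j, b⟩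
  simp [conjTranspose_apply, kroneckerMap_apply, star_mul', mul_comm]

theorem lindblad_dephasing_visibility_monotone
    (n : ℕ) (hn : 1 ≤ n) (ω₀ γ : ℝ) (hγ : 0 ≤ γ)
    (B HB : Matrix (Fin n) (Fin n) ℂ)
    (hB : B ∈ Matrix.unitaryGroup (Fin n) ℂ)
    (hHB : HB.IsHermitian)
    (σz σm : Matrix (Fin 2) (Fin 2) ℂ)
    (hσz : σz = !![1, 0; 0, -1]) (hσm : σm = !![0, 0; 1, 0])
    (H E : Matrix (Fin 2 × Fin n) (Fin 2 × Fin n) ℂ)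
    (hH : H = (ω₀ : ℂ) • (σz ⊗ₖ (1 : Matrix (Fin n) (Fin n) ℂ))
        + (1 : Matrix (Fin 2) (Fin 2) ℂ) ⊗ₖ HB)
    (hE : E = σz ⊗ₖ B)
    (ρ : ℝ → Matrix (Fin 2 × Fin n) (Fin 2 × Fin n) ℂ)
    (hρ : ∀ i j t, HasDerivAt (fun s => ρ s i j)
        ((-Complex.I • (H * ρ t - ρ t * H)
          + (γ : ℂ) • ((2 : ℂ) • (E * ρ t * Eᴴ) - Eᴴ * E * ρ t - ρ t * (Eᴴ * E))) i j) t)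
    (v : ℝ → ℂ)
    (hv : ∀ t, v t = Matrix.trace (ρ t * (σm ⊗ₖ (1 : Matrix (Fin n) (Fin n) ℂ)))) :
    (∀ t, HasDerivAt v ((-2 * Complex.I * ω₀ - 4 * γ) * v t) t) ∧
    (∀ t, 0 ≤ t → ‖v t‖ = ‖v 0‖ * Real.exp (-4 * γ * t)) := by
  set M : Matrix (Fin 2 × Fin n) (Fin 2 × Fin n) ℂ :=
    σm ⊗ₖ (1 : Matrix (Fin n) (Fin n) ℂ) with hM
  set c : ℂ := -2 * Complex.I * ω₀ - 4 * γ with hc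
  -- basic 2×2 identities
  have hσmz : σm * σz = σm := by
    rw [hσm, hσz]; ext i j; fin_cases i <;> fin_cases j <;>
      simp [Matrix.mul_apply, Fin.sum_univ_two]
  have hσzm : σz * σm = -σm := by
    rw [hσm, hσz]; ext i j; fin_cases i <;> fin_cases j <;>
      simp [Matrix.mul_apply, Fin.sum_univ_two]
  have hσzz : σz * σz = 1 := by
    rw [hσz]; ext i j; fin_cases i <;> fin_cases j <;>
      simp [Matrix.mul_apply, Fin.sum_univ_two, Matrix.one_apply]
  have hσzH : σzᴴ = σz := by
    rw [hσz]; ext i j; fin_cases i <;> fin_cases j <;>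
      simp [conjTranspose_apply]
  have hBB : Bᴴ * B = 1 := by
    have := hB.1
    simpa [Matrix.star_eq_conjTranspose] using this
  -- conjugate transpose of E
  have hEH : Eᴴ = σz ⊗ₖ Bᴴ := by
    rw [hE, kron_conjTranspose, hσzH]
  -- key matrix identities
  have hEE : Eᴴ * E = 1 := by
    rw [hEH, hE, ← Matrix.mul_kronecker_mul, hσzz, hBB, Matrix.one_kronecker_one]
  have hEME : Eᴴ * M * E = -M := by
    rw [hEH, hE, hM, ← Matrix.mul_kronecker_mul, ← Matrix.mul_kronecker_mul]
    simp only [hσzm, Matrix.neg_mul, hσmz, Matrix.mul_one, hBB, neg_kron]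
  have hMH : M * H = (ω₀ : ℂ) • M + σm ⊗ₖ HB := by
    rw [hH, hM, Matrix.mul_add, Matrix.mul_smul, ← Matrix.mul_kronecker_mul,
      ← Matrix.mul_kronecker_mul, hσmz]
    simp
  have hHM : H * M = -(ω₀ : ℂ) • M + σm ⊗ₖ HB := by
    rw [hH, hM, Matrix.add_mul, Matrix.smul_mul, ← Matrix.mul_kronecker_mul,
      ← Matrix.mul_kronecker_mul, hσzm, neg_kron]
    simp
  -- the trace computation
  have key : ∀ t,
      Matrix.trace ((-Complex.I • (H * ρ t - ρ t * H)
          + (γ : ℂ) • ((2 : ℂ) • (E * ρ t * Eᴴ) - Eᴴ * E * ρ t - ρ t * (Eᴴ * E))) * M)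
        = c * v t := by
    intro t
    have h1 : Matrix.trace (H * ρ t * M) = (ω₀ : ℂ) * v t
        + Matrix.trace ((σm ⊗ₖ HB) * ρ t) := by
      rw [Matrix.trace_mul_cycle, hMH, Matrix.add_mul,
        Matrix.trace_add, Matrix.smul_mul, Matrix.trace_smul, hv t,
        Matrix.trace_mul_comm (ρ t) M]
      simp [smul_eq_mul]
    have h2 : Matrix.trace (ρ t * H * M) = -(ω₀ : ℂ) * v t
        + Matrix.trace ((σm ⊗ₖ HB) * ρ t) := by
      rw [Matrix.mul_assoc, hHM, Matrix.mul_add, Matrix.trace_add,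
        Matrix.mul_smul, Matrix.trace_smul, hv t,
        Matrix.trace_mul_comm (ρ t) (σm ⊗ₖ HB)]
      simp [smul_eq_mul]
    have h3 : Matrix.trace (E * ρ t * Eᴴ * M) = -v t := by
      rw [Matrix.mul_assoc (E * ρ t), Matrix.trace_mul_comm, ← Matrix.mul_assoc,
        hEME, Matrix.neg_mul, Matrix.trace_neg, hv t,
        Matrix.trace_mul_comm (ρ t) M]
    have h4 : Matrix.trace (Eᴴ * E * ρ t * M) = v t := by
      rw [hEE, Matrix.one_mul, hv t]
    have h5 : Matrix.trace (ρ t * (Eᴴ * E) * M) = v t := by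
      rw [hEE, Matrix.mul_one, hv t]
    rw [Matrix.add_mul, Matrix.trace_add, Matrix.smul_mul, Matrix.smul_mul,
      Matrix.sub_mul, Matrix.sub_mul, Matrix.sub_mul, Matrix.smul_mul,
      Matrix.trace_smul, Matrix.trace_smul, Matrix.trace_sub, Matrix.trace_sub,
      Matrix.trace_sub, Matrix.trace_smul, h1, h2, h3, h4, h5]
    simp only [smul_eq_mul, hc]
    ring
  -- derivative of v
  have hvd : ∀ t, HasDerivAt v (c * v t) t := by
    intro t
    have : HasDerivAt (fun s => Matrix.trace (ρ s * M))
        (Matrix.trace ((-Complex.I • (H * ρ t - ρ t * H)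
          + (γ : ℂ) • ((2 : ℂ) • (E * ρ t * Eᴴ) - Eᴴ * E * ρ t - ρ t * (Eᴴ * E))) * M)) t := by
      simp only [Matrix.trace, Matrix.diag, Matrix.mul_apply]
      exact HasDerivAt.fun_sum fun k _ => HasDerivAt.fun_sum fun j _ => (hρ k j t).mul_const (M j k)
    rw [key t] at this
    exact this.congr_deriv rfl |>.congr_of_eventuallyEq (by filter_upwards with s using (hv s))
  refine ⟨hvd, ?_⟩
  -- solve the ODE
  have hconst : ∀ t, v t * Complex.exp (-c * t) = v 0 := by
    have hd : ∀ t : ℝ, HasDerivAt (fun s : ℝ => v s * Complex.exp (-c * s)) 0 t := by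
      intro t
      have he : HasDerivAt (fun s : ℝ => Complex.exp (-c * s))
          (-c * Complex.exp (-c * t)) t := by
        have h1 : HasDerivAt (fun s : ℝ => -c * (s : ℂ)) (-c) t := by
          simpa using (Complex.ofRealCLM.hasDerivAt (x := t)).const_mul (-c)
        simpa [mul_comm] using h1.cexp
      have := (hvd t).mul he
      exact this.congr_deriv (by ring)
    have : ∀ t : ℝ, v t * Complex.exp (-c * t) = v 0 * Complex.exp (-c * 0) := by
      intro t
      exact is_const_of_deriv_eq_zero (fun s => (hd s).differentiableAt)
        (fun s => (hd s).deriv) t 0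
    intro t
    simpa using this t
  have hvt : ∀ t, v t = v 0 * Complex.exp (c * t) := by
    intro t
    have hmul : Complex.exp (-c * (t : ℂ)) * Complex.exp (c * (t : ℂ)) = 1 := by
      rw [← Complex.exp_add, neg_mul, neg_add_cancel, Complex.exp_zero]
    calc v t = v t * (Complex.exp (-c * (t : ℂ)) * Complex.exp (c * (t : ℂ))) := by
          rw [hmul, mul_one]
      _ = (v t * Complex.exp (-c * (t : ℂ))) * Complex.exp (c * (t : ℂ)) := by ring
      _ = v 0 * Complex.exp (c * (t : ℂ)) := by rw [hconst t]
  intro t _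
  rw [hvt t, norm_mul, Complex.norm_exp]
  congr 1
  have : (c * (t : ℂ)).re = -4 * γ * t := by
    simp [hc, Complex.mul_re, Complex.ofReal_re, Complex.ofReal_im]
    try ring
  rw [this]
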